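/- For every graph H and all positive integers t and k, the Ramsey number of H versus the disjoint union of t copies of the complete graph K_k satisfies r(H, t·K_k) ≤ r(H, K_k) + (t − 1)·k. -/

import Mathlib

open SimpleGraph

/-- `G.ContainsCopy H` means the graph `G` contains a subgraph isomorphic to `H`,
i.e. there is an injective graph homomorphism from `H` into `G`. -/
def SimpleGraph.ContainsCopy {α β : Type*} (G : SimpleGraph α) (H : SimpleGraph β) : Prop :=
  ∃ f : H →g G, Function.Injective f

/-- `RamseyProp n H G` : every graph `Γ` on `n` vertices contains a copy of `H`,
or its complement contains a copy of `G`. -/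
def RamseyProp {α β : Type*} (n : ℕ) (H : SimpleGraph α) (G : SimpleGraph β) : Prop :=
  ∀ Γ : SimpleGraph (Fin n), Γ.ContainsCopy H ∨ Γᶜ.ContainsCopy G

/-- The Ramsey number `r(H, G)` : the least positive `n` such that every graph on `n`
vertices contains a copy of `H` or its complement contains a copy of `G`. -/
noncomputable def ramseyNumber {α β : Type*} (H : SimpleGraph α) (G : SimpleGraph β) : ℕ :=
  sInf {n : ℕ | 0 < n ∧ RamseyProp n H G}

/-- `multiClique t k` is `t·K_k`, the disjoint union of `t` copies of the complete
graph on `k` vertices. -/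
def multiClique (t k : ℕ) : SimpleGraph (Fin t × Fin k) where
  Adj u v := u.1 = v.1 ∧ u.2 ≠ v.2
  symm := ⟨fun u v h => ⟨h.1.symm, h.2.symm⟩⟩
  loopless := ⟨fun u h => h.2 rfl⟩

lemma containsCopy_trans {α β γ : Type*} {G : SimpleGraph α} {G' : SimpleGraph β}
    {G'' : SimpleGraph γ} (h1 : G'.ContainsCopy G'') (f : G' →g G)
    (hf : Function.Injective f) : G.ContainsCopy G'' := by
  obtain ⟨g, hg⟩ := h1
  exact ⟨f.comp g, hf.comp hg⟩

lemma ramsey_mono {α β : Type*} {H : SimpleGraph α} {G : SimpleGraph β} {n m : ℕ} (h : n ≤ m)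
    (hn : RamseyProp n H G) : RamseyProp m H G := by
  intro Γ
  have einj : Function.Injective (Fin.castLE h) := Fin.castLE_injective h
  rcases hn (Γ.comap (Fin.castLE h)) with h1 | h1
  · exact Or.inl (containsCopy_trans h1 ⟨Fin.castLE h, fun hab => hab⟩ einj)
  · right
    refine containsCopy_trans h1 ⟨Fin.castLE h, ?_⟩ einj
    intro a b hab
    rw [compl_adj] at hab ⊢
    exact ⟨einj.ne hab.1, hab.2⟩

lemma key_step {α : Type*} {H : SimpleGraph α} {k r n t : ℕ}
    (hr : RamseyProp r H (⊤ : SimpleGraph (Fin k))) (hrn : r ≤ n)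
    (hn : RamseyProp n H (multiClique t k)) :
    RamseyProp (n + k) H (multiClique (t + 1) k) := by
  intro Γ
  -- first find a K_k in Γᶜ
  rcases ramsey_mono (le_trans hrn (Nat.le_add_right n k)) hr Γ with h1 | ⟨f, finj⟩
  · exact Or.inl h1
  -- vertices outside the image of f
  set s : Finset (Fin (n + k)) := Finset.univ \ Finset.image f Finset.univ with hs
  have hcard : s.card = n := by
    rw [hs, Finset.card_sdiff_of_subset (Finset.subset_univ _), Finset.card_image_of_injective _ finj]
    simp
  set g : Fin n → Fin (n + k) := fun i => ↑(s.orderIsoOfFin hcard i) with hg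
  have hginj : Function.Injective g := by
    intro a b hab
    have := Subtype.ext hab
    exact (s.orderIsoOfFin hcard).injective this
  have hgs : ∀ i, g i ∈ s := fun i => (s.orderIsoOfFin hcard i).2
  have hfns : ∀ j, f j ∉ s := by
    intro j hj
    rw [hs, Finset.mem_sdiff] at hj
    exact hj.2 (Finset.mem_image_of_mem f (Finset.mem_univ j))
  rcases hn (Γ.comap g) with h1 | ⟨h2, h2inj⟩
  · exact Or.inl (containsCopy_trans h1 ⟨g, fun hab => hab⟩ hginj)
  · right
    set F : Fin (t + 1) × Fin k → Fin (n + k) :=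
      fun p => Fin.cases (f p.2) (fun m => g (h2 (m, p.2))) p.1 with hF
    have hF0 : ∀ j : Fin k, F (0, j) = f j := fun j => rfl
    have hFs : ∀ (m : Fin t) (j : Fin k), F (m.succ, j) = g (h2 (m, j)) := fun m j => by
      simp [hF]
    have Finj : Function.Injective F := by
      rintro ⟨i, j⟩ ⟨i', j'⟩ heq
      induction i using Fin.cases with
      | zero =>
        induction i' using Fin.cases with
        | zero =>
          rw [hF0, hF0] at heq
          rw [finj heq]
        | succ m' =>
          rw [hF0, hFs] at heq
          exact absurd (heq ▸ hgs (h2 (m', j'))) (hfns j)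
      | succ m =>
        induction i' using Fin.cases with
        | zero =>
          rw [hFs, hF0] at heq
          exact absurd (heq ▸ hfns j') (fun h => h (hgs (h2 (m, j))))
        | succ m' =>
          rw [hFs, hFs] at heq
          have := h2inj (hginj heq)
          rw [Prod.ext_iff] at this
          simp_all
    refine ⟨⟨F, ?_⟩, Finj⟩
    rintro ⟨i, j⟩ ⟨i', j'⟩ ⟨hii', hjj'⟩
    dsimp only at hii' hjj'
    subst hii'
    induction i using Fin.cases with
    | zero =>
      rw [hF0, hF0, compl_adj]
      exact ⟨finj.ne hjj', fun hadj => by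
        have := f.map_rel (show (⊤ : SimpleGraph (Fin k)).Adj j j' from hjj')
        rw [compl_adj] at this
        exact this.2 hadj⟩
    | succ m =>
      rw [hFs, hFs, compl_adj]
      have := h2.map_rel (show (multiClique t k).Adj (m, j) (m, j') from ⟨rfl, hjj'⟩)
      rw [compl_adj] at this
      exact ⟨hginj.ne this.1, this.2⟩

lemma multi_to_one {α : Type*} {H : SimpleGraph α} {n t k : ℕ} (ht : 0 < t)
    (h : RamseyProp n H (multiClique t k)) : RamseyProp n H (⊤ : SimpleGraph (Fin k)) := by
  intro Γ
  rcases h Γ with h1 | h1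
  · exact Or.inl h1
  · right
    obtain ⟨f, finj⟩ := h1
    refine ⟨f.comp ⟨fun j => (⟨0, ht⟩, j), ?_⟩, finj.comp ?_⟩
    · intro a b hab
      exact ⟨rfl, hab⟩
    · intro a b hab
      exact (Prod.ext_iff.mp hab).2

lemma one_to_multi {α : Type*} {H : SimpleGraph α} {n k : ℕ}
    (h : RamseyProp n H (⊤ : SimpleGraph (Fin k))) : RamseyProp n H (multiClique 1 k) := by
  intro Γ
  rcases h Γ with h1 | h1
  · exact Or.inl h1
  · right
    obtain ⟨f, finj⟩ := h1
    refine ⟨f.comp ⟨fun p => p.2, fun hab => hab.2⟩, finj.comp ?_⟩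
    rintro ⟨i, j⟩ ⟨i', j'⟩ hab
    exact Prod.ext (Subsingleton.elim i i') hab

theorem stmt_9 {α : Type} [Fintype α] (H : SimpleGraph α) (t k : ℕ)
    (ht : 0 < t) (hk : 0 < k) :
    ramseyNumber H (multiClique t k) ≤
      ramseyNumber H (⊤ : SimpleGraph (Fin k)) + (t - 1) * k := by
  by_cases hS : {n : ℕ | 0 < n ∧ RamseyProp n H (⊤ : SimpleGraph (Fin k))}.Nonempty
  · -- r := sInf is attained
    obtain ⟨hrpos, hr⟩ := Nat.sInf_mem hS
    set r := sInf {n : ℕ | 0 < n ∧ RamseyProp n H (⊤ : SimpleGraph (Fin k))} with hrdef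
    have main : ∀ u : ℕ, RamseyProp (r + u * k) H (multiClique (u + 1) k) := by
      intro u
      induction u with
      | zero => simpa using one_to_multi hr
      | succ u ih =>
        have := key_step hr (Nat.le_add_right r (u * k)) ih
        have harith : r + (u + 1) * k = r + u * k + k := by ring
        rw [harith]
        exact this
    have hmem : r + (t - 1) * k ∈ {n : ℕ | 0 < n ∧ RamseyProp n H (multiClique t k)} := by
      constructor
      · exact Nat.lt_of_lt_of_le hrpos (Nat.le_add_right r _)
      · have := main (t - 1)
        rwa [Nat.sub_add_cancel ht] at this
    exact Nat.sInf_le hmem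
  · -- degenerate case : the set for K_k is empty, so is the one for t·K_k
    have hempty : {n : ℕ | 0 < n ∧ RamseyProp n H (multiClique t k)} = ∅ := by
      rw [Set.eq_empty_iff_forall_notMem]
      rintro n ⟨hnpos, hn⟩
      exact hS ⟨n, hnpos, multi_to_one ht hn⟩
    rw [ramseyNumber, hempty, Nat.sInf_empty]
    exact Nat.zero_le _
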